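/- Let 𝓛 be a category with zero morphisms equipped with a pre-summability structure (S, π₀, π₁, σ) satisfying (S-wit). Then there is a unique natural transformation c_X ∈ 𝓛(S²X, S²X) such that π_i∘π_j∘c_X = π_j∘π_i for all i, j ∈ {0,1}. Moreover c_X∘c_X = id_{S²X} and c_X = ⟨S(π₀), S(π₁)⟩. -/
import Mathlib


open CategoryTheory Limits

universe v u

/-- A pre-summability structure on a category with zero morphisms: a functor `S`
together with jointly monic natural transformations `π₀, π₁ : S ⟶ 𝟭 C` and a
natural transformation `σ : S ⟶ 𝟭 C`. -/
structure PreSummability (C : Type u) [Category.{v} C] [HasZeroMorphisms C] where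
  S : C ⥤ C
  π0 : S ⟶ 𝟭 C
  π1 : S ⟶ 𝟭 C
  σ : S ⟶ 𝟭 C
  jointly_monic : ∀ {Y X : C} (f g : Y ⟶ S.obj X),
    f ≫ π0.app X = g ≫ π0.app X → f ≫ π1.app X = g ≫ π1.app X → f = g

namespace PreSummability

variable {C : Type u} [Category.{v} C] [HasZeroMorphisms C] (P : PreSummability C)

/-- Two morphisms are summable when they admit a (necessarily unique) witness. -/
def Summable {Y X : C} (f₀ f₁ : Y ⟶ X) : Prop :=
  ∃ h : Y ⟶ P.S.obj X, h ≫ P.π0.app X = f₀ ∧ h ≫ P.π1.app X = f₁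

/-- The witness `⟨f₀, f₁⟩` of a summable pair (an arbitrary value if the pair is
not summable). -/
noncomputable def witness {Y X : C} (f₀ f₁ : Y ⟶ X) : Y ⟶ P.S.obj X :=
  @dite _ (P.Summable f₀ f₁) (Classical.propDecidable _) (fun h => h.choose) (fun _ => 0)

/-- The sum `f₀ + f₁ = σ ∘ ⟨f₀, f₁⟩` of a summable pair. -/
noncomputable def sum {Y X : C} (f₀ f₁ : Y ⟶ X) : Y ⟶ X :=
  P.witness f₀ f₁ ≫ P.σ.app X

/-- Projections indexed by a boolean. -/
def pr (i : Bool) : P.S ⟶ 𝟭 C := if i then P.π1 else P.π0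

/-- Axiom (S-com): `π₁` and `π₀` are summable with `π₁ + π₀ = σ`. -/
def SCom : Prop := ∀ X : C,
  P.Summable (P.π1.app X) (P.π0.app X) ∧ P.sum (P.π1.app X) (P.π0.app X) = P.σ.app X

/-- Axiom (S-zero): `0` and `id` are summable with `0 + id = id`. -/
def SZero : Prop := ∀ X : C,
  P.Summable (0 : X ⟶ X) (𝟙 X) ∧ P.sum (0 : X ⟶ X) (𝟙 X) = 𝟙 X

/-- Axiom (S-wit): if `σ∘f₀` and `σ∘f₁` are summable then `f₀` and `f₁` are summable. -/
def SWit : Prop := ∀ (X Y : C) (f₀ f₁ : X ⟶ P.S.obj Y),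
  P.Summable (f₀ ≫ P.σ.app Y) (f₁ ≫ P.σ.app Y) → P.Summable f₀ f₁

end PreSummability

open PreSummability

/-- The defining property of the flip `c` on `S²`:
`π_i ∘ π_j ∘ c = π_j ∘ π_i` for all `i, j ∈ {0,1}`, together with naturality. -/
def IsFlip {C : Type u} [Category.{v} C] [HasZeroMorphisms C]
    (P : PreSummability C)
    (c : ∀ X : C, P.S.obj (P.S.obj X) ⟶ P.S.obj (P.S.obj X)) : Prop :=
  (∀ {X Y : C} (f : X ⟶ Y),
      P.S.map (P.S.map f) ≫ c Y = c X ≫ P.S.map (P.S.map f)) ∧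
  (∀ (X : C) (i j : Bool),
      c X ≫ (P.pr j).app (P.S.obj X) ≫ (P.pr i).app X =
        (P.pr i).app (P.S.obj X) ≫ (P.pr j).app X)


namespace FlipAux

variable {C : Type u} [Category.{v} C] [HasZeroMorphisms C] (P : PreSummability C)

lemma pr_nat (i : Bool) {A B : C} (g : A ⟶ B) :
    P.S.map g ≫ (P.pr i).app B = (P.pr i).app A ≫ g := by
  cases i
  · simpa [PreSummability.pr] using P.π0.naturality g
  · simpa [PreSummability.pr] using P.π1.naturality g

lemma pr_pr (i j : Bool) (X : C) :
    P.S.map ((P.pr j).app X) ≫ (P.pr i).app X = (P.pr i).app (P.S.obj X) ≫ (P.pr j).app X := by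
  cases i
  · simpa [PreSummability.pr] using P.π0.naturality ((P.pr j).app X)
  · simpa [PreSummability.pr] using P.π1.naturality ((P.pr j).app X)

lemma jm {Y X : C} (f g : Y ⟶ P.S.obj X)
    (h : ∀ i : Bool, f ≫ (P.pr i).app X = g ≫ (P.pr i).app X) : f = g := by
  apply P.jointly_monic
  · simpa [PreSummability.pr] using h false
  · simpa [PreSummability.pr] using h true

lemma witness_spec {Y X : C} {f₀ f₁ : Y ⟶ X} (h : P.Summable f₀ f₁) :
    P.witness f₀ f₁ ≫ P.π0.app X = f₀ ∧ P.witness f₀ f₁ ≫ P.π1.app X = f₁ := by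
  unfold PreSummability.witness
  rw [dif_pos h]
  exact h.choose_spec

lemma summableS (hwit : P.SWit) (X : C) :
    P.Summable (P.S.map (P.π0.app X)) (P.S.map (P.π1.app X)) := by
  apply hwit
  refine ⟨P.σ.app (P.S.obj X), ?_, ?_⟩
  · simpa using (P.σ.naturality (P.π0.app X)).symm
  · simpa using (P.σ.naturality (P.π1.app X)).symm

lemma wit_pr (hwit : P.SWit) (X : C) (j : Bool) :
    P.witness (P.S.map (P.π0.app X)) (P.S.map (P.π1.app X)) ≫ (P.pr j).app (P.S.obj X)
      = P.S.map ((P.pr j).app X) := by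
  cases j
  · simpa [PreSummability.pr] using (witness_spec P (summableS P hwit X)).1
  · simpa [PreSummability.pr] using (witness_spec P (summableS P hwit X)).2

lemma flip_pi {c : ∀ X : C, P.S.obj (P.S.obj X) ⟶ P.S.obj (P.S.obj X)}
    (hc : IsFlip P c) (X : C) (j : Bool) :
    c X ≫ (P.pr j).app (P.S.obj X) = P.S.map ((P.pr j).app X) := by
  apply jm
  intro i
  rw [Category.assoc, hc.2 X i j, pr_pr]

lemma flip_eq_wit (hwit : P.SWit) {c : ∀ X : C, P.S.obj (P.S.obj X) ⟶ P.S.obj (P.S.obj X)}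
    (hc : IsFlip P c) (X : C) :
    c X = P.witness (P.S.map (P.π0.app X)) (P.S.map (P.π1.app X)) := by
  apply jm
  intro i
  rw [flip_pi P hc X i, wit_pr P hwit X i]

lemma wit_isFlip (hwit : P.SWit) :
    IsFlip P (fun X => P.witness (P.S.map (P.π0.app X)) (P.S.map (P.π1.app X))) := by
  constructor
  · intro X Y f
    apply jm
    intro i
    rw [Category.assoc, wit_pr P hwit Y i, Category.assoc, pr_nat,
      ← Category.assoc, wit_pr P hwit X i, ← P.S.map_comp, ← P.S.map_comp, pr_nat]
  · intro X i j
    rw [← Category.assoc, wit_pr P hwit X j, pr_pr]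

lemma flip_invol {c : ∀ X : C, P.S.obj (P.S.obj X) ⟶ P.S.obj (P.S.obj X)}
    (hc : IsFlip P c) (X : C) : c X ≫ c X = 𝟙 (P.S.obj (P.S.obj X)) := by
  apply jm
  intro j
  rw [Category.assoc, flip_pi P hc X j, Category.id_comp]
  apply jm
  intro i
  rw [Category.assoc, pr_pr, ← Category.assoc]
  rw [Category.assoc, hc.2 X j i]

end FlipAux

theorem stmt6 {C : Type u} [Category.{v} C] [HasZeroMorphisms C]
    (P : PreSummability C) (hwit : P.SWit) :
    (∃! c : ∀ X : C, P.S.obj (P.S.obj X) ⟶ P.S.obj (P.S.obj X), IsFlip P c) ∧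
    (∀ c : ∀ X : C, P.S.obj (P.S.obj X) ⟶ P.S.obj (P.S.obj X), IsFlip P c →
      (∀ X : C, c X ≫ c X = 𝟙 (P.S.obj (P.S.obj X))) ∧
      (∀ X : C, c X = P.witness (P.S.map (P.π0.app X)) (P.S.map (P.π1.app X)))) := by
  constructor
  · refine ⟨fun X => P.witness (P.S.map (P.π0.app X)) (P.S.map (P.π1.app X)),
      FlipAux.wit_isFlip P hwit, ?_⟩
    intro c hc
    funext X
    exact FlipAux.flip_eq_wit P hwit hc X
  · intro c hc
    exact ⟨FlipAux.flip_invol P hc, FlipAux.flip_eq_wit P hwit hc⟩
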